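/- The space ℓ1 ⊕_∞ ℓ1, that is, the product of the sequence space ℓ1 of absolutely summable real sequences with itself, equipped with the norm ‖(x, y)‖ = max(‖x‖_1, ‖y‖_1), is not decomposably octahedral. -/

import Mathlib

/-- Decomposable octahedrality (DOH). -/
def DecomposablyOctahedral (X : Type*) [NormedAddCommGroup X] [NormedSpace ℝ X] : Prop :=
  ∀ E : Finset X, (∀ x ∈ E, ‖x‖ = 1) → ∀ ε : ℝ, 0 < ε → ∃ y : X, ‖y‖ = 1 ∧
    ∀ (n : ℕ) (ys : Fin n → X), ∑ i, ys i = y →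
      ∀ xs : Fin n → X, (∀ i, xs i ∈ E) →
      ∀ a b : Fin n → ℝ, (∀ i, 0 ≤ a i) → (∀ i, 0 ≤ b i) →
        (1 - ε) * ((∑ i, (a i + b i)) + 2) ≤
          ∑ i, (‖a i • xs i + ys i‖ + ‖b i • xs i - ys i‖)

/-- The space `ℓ₁ ⊕_∞ ℓ₁` (with norm `‖(x, y)‖ = max (‖x‖₁, ‖y‖₁)`) is not DOH. -/
theorem not_doh_l1_sup_sum_l1 :
    ¬ DecomposablyOctahedral
      (WithLp ⊤ ((lp (fun _ : ℕ => ℝ) 1) × (lp (fun _ : ℕ => ℝ) 1))) := by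
  classical
  intro h
  set L := lp (fun _ : ℕ => ℝ) 1 with hL
  set X := WithLp ⊤ (L × L) with hX
  set sm : L × L ≃ X := WithLp.equiv ⊤ (L × L) |>.symm with hsm
  set e : L := lp.single 1 0 (1 : ℝ) with he'
  have he : ‖e‖ = 1 := by
    have := lp.norm_single (p := 1) (E := fun _ : ℕ => ℝ) (by norm_num) (0:ℕ) (1:ℝ)
    exact this.trans norm_one
  set u : X := sm (e, 0) with hu'
  set v : X := sm (0, e) with hv'
  have hu : ‖u‖ = 1 := by
    rw [hu', hsm, WithLp.equiv_symm_apply, WithLp.prod_norm_toLp, Prod.norm_def]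
    simp [he]
  have hv : ‖v‖ = 1 := by
    rw [hv', hsm, WithLp.equiv_symm_apply, WithLp.prod_norm_toLp, Prod.norm_def]
    simp [he]
  obtain ⟨y, hy, hmain⟩ := h {u, v}
    (by intro x hx; rcases Finset.mem_insert.mp hx with rfl | hx
        · exact hu
        · rw [Finset.mem_singleton.mp hx]; exact hv)
    (1/4) (by norm_num)
  have hy' : max ‖y.fst‖ ‖y.snd‖ = 1 := hy
  have h1 : ‖y.fst‖ ≤ 1 := hy' ▸ le_max_left _ _
  have h2 : ‖y.snd‖ ≤ 1 := hy' ▸ le_max_right _ _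
  set ys : Fin 2 → X := ![sm (y.fst, 0), sm (0, y.snd)] with hys
  set xs : Fin 2 → X := ![v, u] with hxs
  have hsum : ∑ i, ys i = y := by
    rw [Fin.sum_univ_two]
    show sm (y.fst, 0) + sm (0, y.snd) = y
    rw [hsm, WithLp.equiv_symm_apply, ← WithLp.toLp_add, Prod.mk_add_mk, add_zero, zero_add]
    rfl
  have hmem : ∀ i, xs i ∈ ({u, v} : Finset X) := by
    intro i
    fin_cases i <;> simp [hxs]
  have key := hmain 2 ys hsum xs hmem (fun _ => 1) (fun _ => 1)
    (fun _ => zero_le_one) (fun _ => zero_le_one)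
  rw [Fin.sum_univ_two, Fin.sum_univ_two] at key
  have n1 : ‖(1:ℝ) • xs 0 + ys 0‖ = 1 := by
    show ‖(1:ℝ) • v + sm (y.fst, 0)‖ = 1
    rw [one_smul, hv', hsm, WithLp.equiv_symm_apply, ← WithLp.toLp_add, Prod.mk_add_mk, add_zero, zero_add,
      WithLp.prod_norm_toLp, Prod.norm_def]
    rw [he, max_eq_right h1]
  have n2 : ‖(1:ℝ) • xs 0 - ys 0‖ = 1 := by
    show ‖(1:ℝ) • v - sm (y.fst, 0)‖ = 1
    rw [one_smul, hv', hsm, WithLp.equiv_symm_apply, ← WithLp.toLp_sub, Prod.mk_sub_mk, sub_zero, zero_sub,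
      WithLp.prod_norm_toLp, Prod.norm_def]
    rw [norm_neg, he, max_eq_right h1]
  have n3 : ‖(1:ℝ) • xs 1 + ys 1‖ = 1 := by
    show ‖(1:ℝ) • u + sm (0, y.snd)‖ = 1
    rw [one_smul, hu', hsm, WithLp.equiv_symm_apply, ← WithLp.toLp_add, Prod.mk_add_mk, add_zero, zero_add,
      WithLp.prod_norm_toLp, Prod.norm_def]
    rw [he, max_eq_left h2]
  have n4 : ‖(1:ℝ) • xs 1 - ys 1‖ = 1 := by
    show ‖(1:ℝ) • u - sm (0, y.snd)‖ = 1
    rw [one_smul, hu', hsm, WithLp.equiv_symm_apply, ← WithLp.toLp_sub, Prod.mk_sub_mk, sub_zero, zero_sub,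
      WithLp.prod_norm_toLp, Prod.norm_def]
    rw [he, norm_neg, max_eq_left h2]
  rw [n1, n2, n3, n4] at key
  norm_num at key
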